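/- arXiv:math/0204030 — 5 statements merged into one kernel-verified Lean document; each statement's English description precedes it below -/
import Mathlib

section
/- Let n > 1 and let M_1, ..., M_{p+1} ∈ GL(n, ℂ) satisfy M_1 ⋯ M_{p+1} = I and have no common proper nonzero invariant subspace. Then for every index j, the sum over i ≠ j of min_{λ ∈ ℂ} rank(M_i − λI) is at least n. -/
open Matrix

lemma aux_inj {n : ℕ} (A : Matrix (Fin n) (Fin n) ℂ) (hA : IsUnit A) :
    Function.Injective A.mulVec := by
  obtain ⟨u, hu⟩ := hA
  have h1 : ((↑(u⁻¹) : Matrix (Fin n) (Fin n) ℂ) * A) = 1 := by rw [← hu]; exact u.inv_mul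
  have h2 : ∀ v, (↑(u⁻¹) : Matrix (Fin n) (Fin n) ℂ).mulVec (A.mulVec v) = v := by
    intro v; rw [Matrix.mulVec_mulVec, h1, Matrix.one_mulVec]
  intro x y h
  calc x = (↑(u⁻¹) : Matrix (Fin n) (Fin n) ℂ).mulVec (A.mulVec x) := (h2 x).symm
    _ = (↑(u⁻¹) : Matrix (Fin n) (Fin n) ℂ).mulVec (A.mulVec y) := by rw [h]
    _ = y := h2 y

lemma aux_surj {n : ℕ} (A : Matrix (Fin n) (Fin n) ℂ) (hA : IsUnit A)
    (V : Submodule ℂ (Fin n → ℂ)) (hV : ∀ x ∈ V, A.mulVec x ∈ V) :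
    ∀ x ∈ V, ∃ y ∈ V, A.mulVec y = x := by
  have hVmap : Set.MapsTo A.mulVecLin V V := fun x hx => hV x hx
  set f : V →ₗ[ℂ] V := (A.mulVecLin).restrict hVmap with hf
  have hinj : Function.Injective f := by
    intro a b hab
    have : (a : Fin n → ℂ) = b := aux_inj A hA (Subtype.ext_iff.mp hab)
    exact Subtype.ext this
  have hsurj : Function.Surjective f := LinearMap.surjective_of_injective hinj
  intro x hx
  obtain ⟨y, hy⟩ := hsurj ⟨x, hx⟩
  exact ⟨y, y.2, Subtype.ext_iff.mp hy⟩

lemma aux_list_inv {n : ℕ} (l : List (Matrix (Fin n) (Fin n) ℂ))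
    (V : Submodule ℂ (Fin n → ℂ)) (hl : ∀ A ∈ l, ∀ x ∈ V, A.mulVec x ∈ V) :
    ∀ x ∈ V, l.prod.mulVec x ∈ V := by
  induction l with
  | nil => intro x hx; simpa using hx
  | cons a l ih =>
    intro x hx
    have h1 := ih (fun A hA => hl A (List.mem_cons_of_mem a hA)) x hx
    have := hl a List.mem_cons_self _ h1
    simpa [List.prod_cons, ← Matrix.mulVec_mulVec] using this

lemma aux_list_unit {n : ℕ} (l : List (Matrix (Fin n) (Fin n) ℂ))
    (hl : ∀ A ∈ l, IsUnit A) : IsUnit l.prod := by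
  induction l with
  | nil => simp
  | cons a l ih =>
    rw [List.prod_cons]
    exact (hl a List.mem_cons_self).mul (ih fun A hA => hl A (List.mem_cons_of_mem a hA))

lemma aux_dim {n : ℕ} {ι : Type*} (s : Finset ι) (K : ι → Submodule ℂ (Fin n → ℂ)) :
    n ≤ Module.finrank ℂ (s.inf K : Submodule ℂ (Fin n → ℂ)) +
      ∑ i ∈ s, (n - Module.finrank ℂ (K i : Submodule ℂ (Fin n → ℂ))) := by
  classical
  induction s using Finset.induction_on with
  | empty =>
    have : Module.finrank ℂ ((⊤ : Submodule ℂ (Fin n → ℂ))) = n := by simp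
    rw [Finset.inf_empty]; simp [this]
  | @insert a s ha ih =>
    rw [Finset.inf_insert, Finset.sum_insert ha]
    have h1 := Submodule.finrank_sup_add_finrank_inf_eq (K a) (s.inf K)
    have h2 : Module.finrank ℂ ((K a ⊔ s.inf K : Submodule ℂ (Fin n → ℂ))) ≤ n := by
      have := Submodule.finrank_le (K a ⊔ s.inf K)
      simpa using this
    have h3 : Module.finrank ℂ (K a : Submodule ℂ (Fin n → ℂ)) ≤ n := by
      have := Submodule.finrank_le (K a)
      simpa using this
    omega

/-- Simpson's condition (β_n), multiplicative version: if M_1, ..., M_{p+1} ∈ GL(n, ℂ)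
satisfy M_1 ⋯ M_{p+1} = I and are irreducible (no common invariant subspace other than
0 and ℂⁿ), then for every index j the sum over i ≠ j of
r(M_i) = min_{λ ∈ ℂ} rank(M_i − λI) is at least n. -/
theorem stmt2 (n p : ℕ) (hn : 1 < n)
    (M : Fin (p+1) → Matrix (Fin n) (Fin n) ℂ)
    (hU : ∀ j, IsUnit (M j))
    (hprod : ((List.finRange (p+1)).map M).prod = 1)
    (hirr : ∀ V : Submodule ℂ (Fin n → ℂ),
      (∀ j, ∀ x ∈ V, (M j).mulVec x ∈ V) → V = ⊥ ∨ V = ⊤) :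
    ∀ j, n ≤ ∑ i ∈ Finset.univ.erase j,
      ⨅ lam : ℂ, ((M i) - lam • (1 : Matrix (Fin n) (Fin n) ℂ)).rank := by
  intro j
  by_contra hlt
  push_neg at hlt
  -- choose minimizing lambdas
  have hex : ∀ i : Fin (p+1), ∃ lam : ℂ,
      ((M i) - lam • (1 : Matrix (Fin n) (Fin n) ℂ)).rank
        = ⨅ l : ℂ, ((M i) - l • (1 : Matrix (Fin n) (Fin n) ℂ)).rank := by
    intro i
    have h := Nat.sInf_mem (Set.range_nonempty
      (fun l : ℂ => ((M i) - l • (1 : Matrix (Fin n) (Fin n) ℂ)).rank))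
    rw [sInf_range] at h
    obtain ⟨l, hl⟩ := h
    exact ⟨l, hl⟩
  choose lam hlam using hex
  set K : Fin (p+1) → Submodule ℂ (Fin n → ℂ) :=
    fun i => LinearMap.ker ((M i - lam i • (1 : Matrix (Fin n) (Fin n) ℂ)).mulVecLin) with hK
  -- the key lemma: invariance under all M i, i ≠ j, gives invariance under M j
  have key : ∀ (W : Submodule ℂ (Fin n → ℂ)),
      (∀ i, i ≠ j → ∀ x ∈ W, (M i).mulVec x ∈ W) → ∀ x ∈ W, (M j).mulVec x ∈ W := by
    intro W hW
    obtain ⟨s, t, hst⟩ := List.append_of_mem (List.mem_finRange j)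
    have hnd : (s ++ j :: t).Nodup := hst ▸ List.nodup_finRange (p+1)
    have hjs : j ∉ s := fun h =>
      (List.disjoint_of_nodup_append hnd) h List.mem_cons_self
    have hjt : j ∉ t := (List.nodup_cons.mp (List.nodup_append'.mp hnd).2.1).1
    set A := (s.map M).prod with hA
    set B := (t.map M).prod with hB
    have hAB : A * (M j * B) = 1 := by
      rw [hst, List.map_append, List.prod_append, List.map_cons, List.prod_cons] at hprod
      exact hprod
    have hmem : ∀ (l : List (Fin (p+1))), j ∉ l →
        (∀ N ∈ l.map M, ∀ x ∈ W, N.mulVec x ∈ W) := by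
      intro l hjl N hN x hx
      obtain ⟨i, hil, rfl⟩ := List.mem_map.mp hN
      exact hW i (fun h => hjl (h ▸ hil)) x hx
    have hAinv : ∀ x ∈ W, A.mulVec x ∈ W := aux_list_inv _ W (hmem s hjs)
    have hBinv : ∀ x ∈ W, B.mulVec x ∈ W := aux_list_inv _ W (hmem t hjt)
    have hAunit : IsUnit A := aux_list_unit _ (by
      intro N hN; obtain ⟨i, _, rfl⟩ := List.mem_map.mp hN; exact hU i)
    have hBunit : IsUnit B := aux_list_unit _ (by
      intro N hN; obtain ⟨i, _, rfl⟩ := List.mem_map.mp hN; exact hU i)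
    intro x hx
    obtain ⟨y, hyW, hy⟩ := aux_surj B hBunit W hBinv x hx
    obtain ⟨z, hzW, hz⟩ := aux_surj A hAunit W hAinv y hyW
    have h1 : A.mulVec ((M j * B).mulVec y) = y := by
      rw [Matrix.mulVec_mulVec, hAB, Matrix.one_mulVec]
    have h2 : (M j * B).mulVec y = z := aux_inj A hAunit (by rw [h1, hz])
    have h3 : (M j).mulVec x = z := by
      rw [← hy, Matrix.mulVec_mulVec, h2]
    exact h3 ▸ hzW
  have hmemK : ∀ i x, x ∈ K i → (M i).mulVec x = lam i • x := by
    intro i x hx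
    have : (M i - lam i • (1 : Matrix (Fin n) (Fin n) ℂ)).mulVec x = 0 := hx
    rw [Matrix.sub_mulVec, Matrix.smul_mulVec, Matrix.one_mulVec, sub_eq_zero] at this
    exact this
  -- dimension bound
  have hdim := aux_dim (Finset.univ.erase j) K
  have hKr : ∀ i, (n - Module.finrank ℂ (K i : Submodule ℂ (Fin n → ℂ)))
      = (M i - lam i • (1 : Matrix (Fin n) (Fin n) ℂ)).rank := by
    intro i
    have h1 := LinearMap.finrank_range_add_finrank_ker
      ((M i - lam i • (1 : Matrix (Fin n) (Fin n) ℂ)).mulVecLin)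
    have h2 : Module.finrank ℂ (Fin n → ℂ) = n := by simp
    rw [h2] at h1
    have h3 : (M i - lam i • (1 : Matrix (Fin n) (Fin n) ℂ)).rank
        = Module.finrank ℂ (LinearMap.range
          ((M i - lam i • (1 : Matrix (Fin n) (Fin n) ℂ)).mulVecLin)) := rfl
    have h4 : Module.finrank ℂ (K i : Submodule ℂ (Fin n → ℂ))
        = Module.finrank ℂ (LinearMap.ker
          ((M i - lam i • (1 : Matrix (Fin n) (Fin n) ℂ)).mulVecLin) : Submodule ℂ (Fin n → ℂ)) := rfl
    rw [h3, h4]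
    omega
  have hsum : ∑ i ∈ Finset.univ.erase j,
      (n - Module.finrank ℂ (K i : Submodule ℂ (Fin n → ℂ)))
      = ∑ i ∈ Finset.univ.erase j,
        ⨅ l : ℂ, ((M i) - l • (1 : Matrix (Fin n) (Fin n) ℂ)).rank := by
    refine Finset.sum_congr rfl fun i _ => ?_
    rw [hKr i, hlam i]
  rw [hsum] at hdim
  set V : Submodule ℂ (Fin n → ℂ) := (Finset.univ.erase j).inf K with hV
  have hVle : ∀ i ∈ Finset.univ.erase j, V ≤ K i := fun i hi => Finset.inf_le hi
  have hVpos : 0 < Module.finrank ℂ (V : Submodule ℂ (Fin n → ℂ)) := by omega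
  have hVne : V ≠ ⊥ := by
    intro h
    rw [h, finrank_bot] at hVpos
    exact Nat.lt_irrefl 0 hVpos
  -- invariance of V
  have hVinv : ∀ i, i ≠ j → ∀ x ∈ V, (M i).mulVec x ∈ V := by
    intro i hi x hx
    have hxK : x ∈ K i := hVle i (Finset.mem_erase.mpr ⟨hi, Finset.mem_univ i⟩) hx
    rw [hmemK i x hxK]
    exact V.smul_mem _ hx
  have hVall : ∀ i, ∀ x ∈ V, (M i).mulVec x ∈ V := by
    intro i x hx
    by_cases hij : i = j
    · exact hij ▸ key V hVinv x hx
    · exact hVinv i hij x hx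
  rcases hirr V hVall with h | hVtop
  · exact hVne h
  -- V = ⊤ : all M i, i ≠ j, are scalar; take a line
  · have hscal : ∀ i, i ≠ j → ∀ x, (M i).mulVec x = lam i • x := by
      intro i hi x
      refine hmemK i x (hVle i (Finset.mem_erase.mpr ⟨hi, Finset.mem_univ i⟩) ?_)
      rw [hVtop]; trivial
    set i0 : Fin n := ⟨0, by omega⟩
    set i1 : Fin n := ⟨1, hn⟩
    set W : Submodule ℂ (Fin n → ℂ) := Submodule.span ℂ {Pi.single i0 1} with hW
    have hWinv : ∀ i, i ≠ j → ∀ x ∈ W, (M i).mulVec x ∈ W := by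
      intro i hi x hx
      rw [hscal i hi x]
      exact W.smul_mem _ hx
    have hWall : ∀ i, ∀ x ∈ W, (M i).mulVec x ∈ W := by
      intro i x hx
      by_cases hij : i = j
      · exact hij ▸ key W hWinv x hx
      · exact hWinv i hij x hx
    rcases hirr W hWall with h | h
    · have : (Pi.single i0 1 : Fin n → ℂ) = 0 := by
        rw [← Submodule.span_singleton_eq_bot (R := ℂ)]
        exact h
      have := congrFun this i0
      simp [Pi.single_eq_same] at this
    · have hmem1 : (Pi.single i1 1 : Fin n → ℂ) ∈ W := h ▸ Submodule.mem_top
      obtain ⟨c, hc⟩ := Submodule.mem_span_singleton.mp hmem1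
      have := congrFun hc i1
      have hne : i0 ≠ i1 := by
        intro h01
        have : (0 : ℕ) = 1 := congrArg Fin.val h01
        omega
      rw [Pi.smul_apply, Pi.single_eq_of_ne (Ne.symm hne), Pi.single_eq_same] at this
      simp at this
end

section
/- Let n > 1 and let A_1, ..., A_{p+1} ∈ gl(n, ℂ) satisfy A_1 + ⋯ + A_{p+1} = 0 and have no common proper nonzero invariant subspace. Then for every index j, the sum over i ≠ j of min_{λ ∈ ℂ} rank(A_i − λI) is at least n. -/
open Matrix

lemma finset_sup_finrank_le {ι : Type*} [DecidableEq ι] {n : ℕ} (s : Finset ι)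
    (f : ι → Submodule ℂ (Fin n → ℂ)) :
    Module.finrank ℂ ↥(s.sup f) ≤ ∑ i ∈ s, Module.finrank ℂ ↥(f i) := by
  induction s using Finset.induction with
  | empty => simp
  | @insert a s ha ih =>
    rw [Finset.sup_insert, Finset.sum_insert ha]
    calc Module.finrank ℂ ↥(f a ⊔ s.sup f)
        ≤ Module.finrank ℂ ↥(f a) + Module.finrank ℂ ↥(s.sup f) :=
          Submodule.finrank_add_le_finrank_add_finrank _ _
      _ ≤ _ := by omega

/-- Simpson's condition (β_n), additive version: if A_1, ..., A_{p+1} ∈ gl(n, ℂ)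
satisfy A_1 + ⋯ + A_{p+1} = 0 and are irreducible (no common invariant subspace other
than 0 and ℂⁿ), then for every index j the sum over i ≠ j of
r(A_i) = min_{λ ∈ ℂ} rank(A_i − λI) is at least n. -/
theorem stmt3 (n p : ℕ) (hn : 1 < n)
    (A : Fin (p+1) → Matrix (Fin n) (Fin n) ℂ)
    (hsum : ∑ j, A j = 0)
    (hirr : ∀ V : Submodule ℂ (Fin n → ℂ),
      (∀ j, ∀ x ∈ V, (A j).mulVec x ∈ V) → V = ⊥ ∨ V = ⊤) :
    ∀ j, n ≤ ∑ i ∈ Finset.univ.erase j,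
      ⨅ lam : ℂ, ((A i) - lam • (1 : Matrix (Fin n) (Fin n) ℂ)).rank := by
  intro j
  by_contra hcon
  push_neg at hcon
  -- choose minimizing lam i
  have hmin : ∀ i : Fin (p+1), ∃ lam : ℂ,
      ((A i) - lam • (1 : Matrix (Fin n) (Fin n) ℂ)).rank
        = ⨅ l : ℂ, ((A i) - l • (1 : Matrix (Fin n) (Fin n) ℂ)).rank := by
    intro i
    obtain ⟨lam, hl⟩ := Nat.sInf_mem (Set.range_nonempty
      (fun l : ℂ => ((A i) - l • (1 : Matrix (Fin n) (Fin n) ℂ)).rank))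
    exact ⟨lam, hl.trans sInf_range⟩
  choose lam hlam using hmin
  set B : Fin (p+1) → Matrix (Fin n) (Fin n) ℂ :=
    fun i => A i - lam i • (1 : Matrix (Fin n) (Fin n) ℂ) with hB
  set W : Submodule ℂ (Fin n → ℂ) :=
    (Finset.univ.erase j).sup (fun i => LinearMap.range (B i).mulVecLin) with hW
  -- B i x ∈ W for i ≠ j
  have hBW : ∀ i ∈ Finset.univ.erase j, ∀ x : Fin n → ℂ, (B i).mulVec x ∈ W := by
    intro i hi x
    exact Finset.le_sup (f := fun i => LinearMap.range (B i).mulVecLin) hi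
      (LinearMap.mem_range_self _ x)
  -- invariance of W
  have hinvW : ∀ k, ∀ x ∈ W, (A k).mulVec x ∈ W := by
    have hErase : ∀ i ∈ Finset.univ.erase j, ∀ x ∈ W, (A i).mulVec x ∈ W := by
      intro i hi x hx
      have : (A i).mulVec x = (B i).mulVec x + lam i • x := by
        simp [hB, sub_mulVec, smul_mulVec, one_mulVec]
      rw [this]
      exact W.add_mem (hBW i hi x) (W.smul_mem _ hx)
    intro k x hx
    by_cases hk : k = j
    · subst hk
      have hAj : A k = -∑ i ∈ Finset.univ.erase k, A i := by
        have := Finset.add_sum_erase Finset.univ A (Finset.mem_univ k)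
        rw [hsum] at this
        linear_combination (norm := module) this
      rw [hAj]
      have : (-∑ i ∈ Finset.univ.erase k, A i).mulVec x
          = -∑ i ∈ Finset.univ.erase k, (A i).mulVec x := by
        rw [neg_mulVec]
        congr 1
        induction (Finset.univ.erase k) using Finset.induction with
        | empty => simp [zero_mulVec]
        | @insert a s ha ih => simp [Finset.sum_insert ha, add_mulVec, ih]
      rw [this]
      refine W.neg_mem (Submodule.sum_mem _ ?_)
      intro i hi
      exact hErase i hi x hx
    · exact hErase k (Finset.mem_erase.mpr ⟨hk, Finset.mem_univ k⟩) x hx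
  -- W has dimension < n, so W ≠ ⊤
  have hdim : Module.finrank ℂ ↥W < n := by
    calc Module.finrank ℂ ↥W
        ≤ ∑ i ∈ Finset.univ.erase j,
            Module.finrank ℂ ↥(LinearMap.range (B i).mulVecLin) :=
          finset_sup_finrank_le _ _
      _ = ∑ i ∈ Finset.univ.erase j,
            ⨅ l : ℂ, ((A i) - l • (1 : Matrix (Fin n) (Fin n) ℂ)).rank := by
          refine Finset.sum_congr rfl fun i _ => ?_
          exact hlam i
      _ < n := hcon
  have htopn : Module.finrank ℂ ↥(⊤ : Submodule ℂ (Fin n → ℂ)) = n := by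
    rw [finrank_top]
    simp [Module.finrank_pi]
  have hWtop : W ≠ ⊤ := by
    intro h
    rw [h, htopn] at hdim
    omega
  have hWbot : W = ⊥ := (hirr W hinvW).resolve_right hWtop
  -- hence each B i = 0 for i ≠ j
  have hBzero : ∀ i ∈ Finset.univ.erase j, B i = 0 := by
    intro i hi
    ext a b
    have := hBW i hi (Pi.single b 1)
    rw [hWbot, Submodule.mem_bot] at this
    have := congrFun this a
    simpa [mulVec_single] using this
  -- so each A k is scalar
  have hscalar : ∀ k, ∃ c : ℂ, A k = c • (1 : Matrix (Fin n) (Fin n) ℂ) := by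
    intro k
    by_cases hk : k = j
    · subst hk
      refine ⟨-∑ i ∈ Finset.univ.erase k, lam i, ?_⟩
      have hAj : A k = -∑ i ∈ Finset.univ.erase k, A i := by
        have := Finset.add_sum_erase Finset.univ A (Finset.mem_univ k)
        rw [hsum] at this
        linear_combination (norm := module) this
      have hAi : ∀ i ∈ Finset.univ.erase k, A i = lam i • (1 : Matrix (Fin n) (Fin n) ℂ) := by
        intro i hi
        have := hBzero i hi
        rw [hB] at this
        simpa [sub_eq_zero] using this
      rw [hAj, Finset.sum_congr rfl hAi, ← Finset.sum_smul]
      module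
    · have := hBzero k (Finset.mem_erase.mpr ⟨hk, Finset.mem_univ k⟩)
      rw [hB] at this
      exact ⟨lam k, by simpa [sub_eq_zero] using this⟩
  -- contradiction: span of a single vector is invariant
  have i0 : Fin n := ⟨0, by omega⟩
  set v : Fin n → ℂ := Pi.single i0 (1 : ℂ) with hv
  have hvne : v ≠ 0 := by
    intro h
    have := congrFun h i0
    simp [hv, Pi.single_eq_same] at this
  have hinvV : ∀ k, ∀ x ∈ Submodule.span ℂ {v}, (A k).mulVec x ∈ Submodule.span ℂ {v} := by
    intro k x hx
    obtain ⟨c, hc⟩ := hscalar k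
    rw [hc, smul_mulVec, one_mulVec]
    exact Submodule.smul_mem _ c hx
  rcases hirr (Submodule.span ℂ {v}) hinvV with h | h
  · exact hvne (by simpa [Submodule.span_singleton_eq_bot] using h)
  · have h1 : Module.finrank ℂ ↥(Submodule.span ℂ {v}) = 1 := finrank_span_singleton hvne
    rw [h, htopn] at h1
    omega
end

section
/- Let V = V_1 ⊕ V_2 be a decomposition of ℂⁿ and let U = Hom(V_2, V_1) be identified with the abelian unipotent group of block matrices (I, u; 0, I). Let M_1, ..., M_{p+1} be block upper-triangular invertible matrices (with respect to V_1, V_2) satisfying M_1 ⋯ M_{p+1} = I. Then the map U^{p+1} → U sending (u_1, ..., u_{p+1}) to the product (u_1 M_1 u_1^{-1})(u_2 M_2 u_2^{-1}) ⋯ (u_{p+1} M_{p+1} u_{p+1}^{-1}) lands in U (i.e., the product is block upper-triangular with identity diagonal blocks), and, under the identification of U with its Lie algebra Hom(V_2, V_1), equals u_1 − M_1(u_1) + M_1(u_2 − M_2(u_2)) + ⋯ + M_1⋯M_p(u_{p+1} − M_{p+1}(u_{p+1})), where M_j acts on Hom(V_2, V_1) by u ↦ (M_j|_{V_1}) ∘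 u ∘ (M_j|_{V_2})^{-1}. -/
open Matrix


private lemma key13 (a b : ℕ) : ∀ (n : ℕ) (A : Fin n → Matrix (Fin a) (Fin a) ℂ)
    (C : Fin n → Matrix (Fin a) (Fin b) ℂ) (D : Fin n → Matrix (Fin b) (Fin b) ℂ),
    ((List.finRange n).map (fun j => Matrix.fromBlocks (A j) (C j) 0 (D j))).prod
    = Matrix.fromBlocks ((List.finRange n).map A).prod
        (∑ j : Fin n, (((List.finRange n).take j.val).map A).prod * C j *
          (((List.finRange n).drop (j.val+1)).map D).prod)
        0 ((List.finRange n).map D).prod := by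
  intro n
  induction n with
  | zero => intro A C D; simp [← Matrix.fromBlocks_one]
  | succ n ih =>
    intro A C D
    rw [List.finRange_succ]
    simp only [List.map_cons, List.prod_cons, List.map_map, Fin.sum_univ_succ,
      List.take_cons, List.take_succ_cons, List.drop_succ_cons, List.take_zero,
      List.map_nil, List.prod_nil, Fin.val_zero, Fin.val_succ, List.drop_zero,
      List.map_take, List.map_drop]
    rw [show ((fun j => Matrix.fromBlocks (A j) (C j) 0 (D j)) ∘ Fin.succ)
        = fun j => Matrix.fromBlocks ((A ∘ Fin.succ) j) ((C ∘ Fin.succ) j) 0 ((D ∘ Fin.succ) j) from rfl,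
      ih]
    rw [Matrix.fromBlocks_multiply]
    rw [Matrix.zero_mul, Matrix.mul_zero, Matrix.zero_mul, add_zero, zero_add, Matrix.mul_sum]
    rw [Matrix.fromBlocks_inj]
    refine ⟨rfl, ?_, by simp, by simp⟩
    rw [add_comm]
    congr 1
    · simp
    · exact Finset.sum_congr rfl fun x _ => by simp [Matrix.mul_assoc]

private lemma split13 (b n : ℕ) (j : Fin n) (D : Fin n → Matrix (Fin b) (Fin b) ℂ) :
    ((List.finRange n).map D).prod
    = (((List.finRange n).take j.val).map D).prod
        * (D j * (((List.finRange n).drop (j.val+1)).map D).prod) := by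
  conv_lhs => rw [← List.take_append_drop j.val (List.finRange n)]
  rw [List.drop_eq_getElem_cons (by simp [j.isLt]), List.getElem_finRange]
  simp [Fin.cast]

/-- Block upper-triangular M_j with M_1 ⋯ M_{p+1} = I; conjugating each M_j by the
unipotent element (I, u_j; 0, I) and taking the product lands in the unipotent group U
(block upper-triangular with identity diagonal blocks), and in the identification of U
with its Lie algebra Hom(V₂, V₁) the result equals
Σ_j M_1⋯M_{j-1}(u_j − M_j(u_j)), where M acts on Hom(V₂,V₁) by u ↦ A u D⁻¹. -/
theorem stmt13 (a b p : ℕ)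
    (A : Fin (p+1) → Matrix (Fin a) (Fin a) ℂ)
    (Bq : Fin (p+1) → Matrix (Fin a) (Fin b) ℂ)
    (D : Fin (p+1) → Matrix (Fin b) (Fin b) ℂ)
    (hA : ∀ j, IsUnit (A j)) (hD : ∀ j, IsUnit (D j))
    (M : Fin (p+1) → Matrix (Fin a ⊕ Fin b) (Fin a ⊕ Fin b) ℂ)
    (hM : ∀ j, M j = Matrix.fromBlocks (A j) (Bq j) 0 (D j))
    (hprod : ((List.finRange (p+1)).map M).prod = 1)
    (u : Fin (p+1) → Matrix (Fin a) (Fin b) ℂ) :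
    ((List.finRange (p+1)).map (fun j =>
        Matrix.fromBlocks 1 (u j) 0 1 * M j * (Matrix.fromBlocks 1 (u j) 0 1)⁻¹)).prod
      = Matrix.fromBlocks 1
          (∑ j, (((List.finRange (p+1)).take j.val).map A).prod
              * (u j - A j * u j * (D j)⁻¹)
              * ((((List.finRange (p+1)).take j.val).map D).prod)⁻¹)
          0 1 := by
  -- decompose hprod
  rw [show M = fun j => Matrix.fromBlocks (A j) (Bq j) 0 (D j) from funext hM,
    key13, ← Matrix.fromBlocks_one, Matrix.fromBlocks_inj] at hprod
  obtain ⟨hPA, hSB, -, hPD⟩ := hprod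
  -- inverse of unipotent
  have hinv : ∀ j, (Matrix.fromBlocks (1 : Matrix (Fin a) (Fin a) ℂ) (u j) 0
      (1 : Matrix (Fin b) (Fin b) ℂ))⁻¹ = Matrix.fromBlocks 1 (-(u j)) 0 1 := fun j =>
    Matrix.inv_eq_right_inv (by
      rw [Matrix.fromBlocks_multiply]; simp [← Matrix.fromBlocks_one])
  -- conjugates
  have hconj : (fun j => Matrix.fromBlocks 1 (u j) 0 1 * M j
        * (Matrix.fromBlocks (1 : Matrix (Fin a) (Fin a) ℂ) (u j) 0
            (1 : Matrix (Fin b) (Fin b) ℂ))⁻¹)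
      = fun j => Matrix.fromBlocks (A j) (Bq j + (u j * D j - A j * u j)) 0 (D j) := by
    funext j
    rw [hinv j, hM j, Matrix.fromBlocks_multiply, Matrix.fromBlocks_multiply]
    rw [Matrix.fromBlocks_inj]
    refine ⟨by simp, ?_, by simp, by simp⟩
    simp only [Matrix.one_mul, Matrix.mul_one, Matrix.mul_zero, Matrix.zero_mul,
      add_zero, zero_add, Matrix.mul_neg]
    abel
  rw [hconj, key13, hPA, hPD, Matrix.fromBlocks_inj]
  refine ⟨rfl, ?_, rfl, rfl⟩
  -- the sums
  have hDdet : ∀ j, IsUnit (D j).det := fun j => (Matrix.isUnit_iff_isUnit_det _).mp (hD j)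
  have hPdUnit : ∀ j : Fin (p+1), IsUnit (((List.finRange (p+1)).take j.val).map D).prod := by
    intro j
    refine List.prod_isUnit fun m hm => ?_
    obtain ⟨i, -, rfl⟩ := List.mem_map.mp hm
    exact hD i
  have hQ : ∀ j : Fin (p+1), (((List.finRange (p+1)).drop (j.val+1)).map D).prod
      = (D j)⁻¹ * ((((List.finRange (p+1)).take j.val).map D).prod)⁻¹ := by
    intro j
    have h1 := (split13 b (p+1) j D).symm
    rw [hPD] at h1
    have h2 := Matrix.inv_eq_right_inv h1
    rw [h2, ← Matrix.mul_assoc, Matrix.nonsing_inv_mul _ (hDdet j), Matrix.one_mul]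
  have hterm : ∀ j : Fin (p+1),
      (((List.finRange (p+1)).take j.val).map A).prod
          * (Bq j + (u j * D j - A j * u j))
          * (((List.finRange (p+1)).drop (j.val+1)).map D).prod
      = (((List.finRange (p+1)).take j.val).map A).prod * Bq j
            * (((List.finRange (p+1)).drop (j.val+1)).map D).prod
        + (((List.finRange (p+1)).take j.val).map A).prod
            * (u j - A j * u j * (D j)⁻¹)
            * ((((List.finRange (p+1)).take j.val).map D).prod)⁻¹ := by
    intro j
    rw [hQ j]
    simp only [Matrix.mul_add, Matrix.add_mul, Matrix.sub_mul, Matrix.mul_sub,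
      ← Matrix.mul_assoc, Matrix.mul_nonsing_inv_cancel_right _ _ (hDdet j)]
  rw [Finset.sum_congr rfl fun j _ => hterm j, Finset.sum_add_distrib, hSB, zero_add]
end

section
/- With notation as in the preceding block-triangular setting, the linear map U^{p+1} → U, (u_1, ..., u_{p+1}) ↦ Σ_{j=1}^{p+1} M_1⋯M_{j-1}·(u_j − M_j·u_j) (where M·u denotes the action A u D^{-1} on U = Hom(V_2, V_1)) is surjective if and only if the coinvariant space U/span{u − M_j·u : u ∈ U, j = 1,...,p+1} is zero, and the dual of this coinvariant space is canonically isomorphic to the space of module homomorphisms Hom(V_1, V_2) intertwining the actions of all the M_j (i.e., linear maps f : V_1 → V_2 with f ∘ A_j = D_j ∘ f for all j); hence the map is surjective if and only if there is no nonzero intertwiner from V_1 to V_2. -/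
open Matrix

namespace Stmt14Aux

variable {a b : ℕ}

noncomputable def tr (a b : ℕ) :
    Matrix (Fin b) (Fin a) ℂ →ₗ[ℂ] Module.Dual ℂ (Matrix (Fin a) (Fin b) ℂ) where
  toFun f :=
    { toFun := fun v => Matrix.trace (f * v)
      map_add' := fun x y => by simp [Matrix.mul_add]
      map_smul' := fun c x => by simp [Matrix.mul_smul] }
  map_add' f g := by ext v; simp [Matrix.add_mul]
  map_smul' c f := by ext v; simp [Matrix.smul_mul]

lemma tr_apply (f : Matrix (Fin b) (Fin a) ℂ) (v) : tr a b f v = Matrix.trace (f * v) := rfl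

lemma tr_std (f : Matrix (Fin b) (Fin a) ℂ) (i : Fin a) (j : Fin b) :
    tr a b f (Matrix.single i j 1) = f j i := by
  simp [tr_apply, Matrix.trace, Matrix.mul_apply, Matrix.single, Matrix.diag,
    ite_and, Finset.sum_ite_eq, Finset.sum_ite_eq']

lemma tr_injective : Function.Injective (tr a b) := by
  intro f g h
  ext j i
  have := congrArg (fun φ => φ (Matrix.single i j 1)) h
  simpa [tr_std] using this

lemma tr_surjective : Function.Surjective (tr a b) := by
  intro φ
  refine ⟨Matrix.of fun j i => φ (Matrix.single i j 1), ?_⟩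
  ext v
  rw [tr_apply]
  conv_rhs => rw [matrix_eq_sum_single v]
  simp only [map_sum]
  rw [Matrix.trace]
  simp only [Matrix.diag, Matrix.mul_apply, Matrix.of_apply]
  rw [Finset.sum_comm]
  congr 1; ext i; congr 1; ext j
  have h1 : Matrix.single i j (v i j) = v i j • Matrix.single i j 1 := by
    simp [Matrix.smul_single]
  rw [h1, _root_.map_smul]
  simp [mul_comm]

noncomputable def trEquiv (a b : ℕ) :
    Matrix (Fin b) (Fin a) ℂ ≃ₗ[ℂ] Module.Dual ℂ (Matrix (Fin a) (Fin b) ℂ) :=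
  LinearEquiv.ofBijective (tr a b) ⟨tr_injective, tr_surjective⟩

lemma trEquiv_apply (f : Matrix (Fin b) (Fin a) ℂ) (v) :
    trEquiv a b f v = Matrix.trace (f * v) := rfl

end Stmt14Aux

open Stmt14Aux in
/-- With M_j = (A_j, B_j; 0, D_j) block upper-triangular, A_1⋯A_{p+1} = I and
D_1⋯D_{p+1} = I, the linear map Φ : U^{p+1} → U = Hom(V₂,V₁),
(u_j) ↦ Σ_j M_1⋯M_{j-1}(u_j − M_j(u_j)) (with M·u = A u D⁻¹), is surjective iff the
coinvariant space U / span{u − M_j·u} vanishes; the dual of the coinvariants is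
isomorphic to the space of intertwiners f : V₁ → V₂ (f A_j = D_j f); hence Φ is
surjective iff there is no nonzero intertwiner. -/
theorem stmt14 (a b p : ℕ)
    (A : Fin (p+1) → Matrix (Fin a) (Fin a) ℂ)
    (D : Fin (p+1) → Matrix (Fin b) (Fin b) ℂ)
    (hA : ∀ j, IsUnit (A j)) (hD : ∀ j, IsUnit (D j))
    (hprodA : ((List.finRange (p+1)).map A).prod = 1)
    (hprodD : ((List.finRange (p+1)).map D).prod = 1) :
    let Φ : (Fin (p+1) → Matrix (Fin a) (Fin b) ℂ) → Matrix (Fin a) (Fin b) ℂ :=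
      fun u => ∑ j, (((List.finRange (p+1)).take j.val).map A).prod
          * (u j - A j * u j * (D j)⁻¹)
          * ((((List.finRange (p+1)).take j.val).map D).prod)⁻¹
    let W : Submodule ℂ (Matrix (Fin a) (Fin b) ℂ) :=
      Submodule.span ℂ
        {x | ∃ (v : Matrix (Fin a) (Fin b) ℂ) (j : Fin (p+1)), x = v - A j * v * (D j)⁻¹}
    let Inter : Submodule ℂ (Matrix (Fin b) (Fin a) ℂ) :=
      { carrier := {f | ∀ j, f * A j = D j * f}
        add_mem' := by
          intro f g hf hg j
          simp [Matrix.add_mul, Matrix.mul_add, hf j, hg j]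
        zero_mem' := by intro j; simp
        smul_mem' := by
          intro c f hf j
          simp [Matrix.smul_mul, Matrix.mul_smul, hf j] }
    (Function.Surjective Φ ↔ W = ⊤) ∧
    Nonempty (Module.Dual ℂ (Matrix (Fin a) (Fin b) ℂ ⧸ W) ≃ₗ[ℂ] Inter) ∧
    (Function.Surjective Φ ↔
      ∀ f : Matrix (Fin b) (Fin a) ℂ, (∀ j, f * A j = D j * f) → f = 0) := by
  intro Φ W Inter
  have hDdet : ∀ j, IsUnit (D j).det := fun j => (Matrix.isUnit_iff_isUnit_det _).mp (hD j)
  -- generators and stability of W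
  have hgen : ∀ (v : Matrix (Fin a) (Fin b) ℂ) (j : Fin (p+1)), v - A j * v * (D j)⁻¹ ∈ W :=
    fun v j => Submodule.subset_span ⟨v, j, rfl⟩
  have hstab : ∀ (j : Fin (p+1)) (w : Matrix (Fin a) (Fin b) ℂ), w ∈ W →
      A j * w * (D j)⁻¹ ∈ W := by
    intro j w hw
    have h2 := W.sub_mem hw (hgen w j)
    simpa using h2
  have hlist : ∀ (l : List (Fin (p+1))) (w : Matrix (Fin a) (Fin b) ℂ), w ∈ W →
      (l.map A).prod * w * ((l.map D).prod)⁻¹ ∈ W := by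
    intro l
    induction l with
    | nil => intro w hw; simpa using hw
    | cons j l ih =>
      intro w hw
      have h2 := hstab j _ (ih w hw)
      simpa [Matrix.mul_inv_rev, Matrix.mul_assoc] using h2
  have hPhiW : ∀ u, Φ u ∈ W := by
    intro u
    exact W.sum_mem fun j _ => hlist _ _ (hgen (u j) j)
  -- the prefix action
  set π : ℕ → Matrix (Fin a) (Fin b) ℂ → Matrix (Fin a) (Fin b) ℂ :=
    fun i v => (((List.finRange (p+1)).take i).map A).prod * v
      * ((((List.finRange (p+1)).take i).map D).prod)⁻¹ with hπ
  have htake : ∀ (j : Fin (p+1)), (List.finRange (p+1)).take (j.val+1)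
      = (List.finRange (p+1)).take j.val ++ [j] := by
    intro j
    rw [List.take_succ]
    congr 1
    rw [List.getElem?_eq_getElem (by simpa using j.isLt)]
    simp
  have hπsucc : ∀ (j : Fin (p+1)) (v : Matrix (Fin a) (Fin b) ℂ),
      π (j.val+1) v = (((List.finRange (p+1)).take j.val).map A).prod * (A j * v * (D j)⁻¹)
        * ((((List.finRange (p+1)).take j.val).map D).prod)⁻¹ := by
    intro j v
    rw [hπ]
    simp only [htake j, List.map_append, List.prod_append, List.map_cons, List.map_nil,
      List.prod_cons, List.prod_nil, mul_one, Matrix.mul_inv_rev, Matrix.mul_assoc]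
  have hsingle : ∀ (j : Fin (p+1)) (v : Matrix (Fin a) (Fin b) ℂ),
      Φ (Pi.single j v) = π j.val v - π (j.val+1) v := by
    intro j v
    show (∑ i, _) = _
    rw [Finset.sum_eq_single j]
    · rw [hπsucc j v, hπ]
      simp only [Pi.single_eq_same, Matrix.sub_mul, Matrix.mul_sub, Matrix.mul_assoc]
    · intro i _ hij
      simp [Pi.single_eq_of_ne hij]
    · intro h; exact absurd (Finset.mem_univ j) h
  have hzero : Φ 0 = 0 := by
    show (∑ i, _) = _
    simp
  have hadd : ∀ u w, Φ (u + w) = Φ u + Φ w := by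
    intro u w
    show (∑ i, _) = (∑ i, _) + (∑ i, _)
    rw [← Finset.sum_add_distrib]
    refine Finset.sum_congr rfl fun i _ => ?_
    simp only [Pi.add_apply, Matrix.mul_add, Matrix.add_mul, Matrix.mul_sub, Matrix.sub_mul]
    abel
  have hsmul : ∀ (c : ℂ) u, Φ (c • u) = c • Φ u := by
    intro c u
    show (∑ i, _) = c • (∑ i, _)
    rw [Finset.smul_sum]
    refine Finset.sum_congr rfl fun i _ => ?_
    simp [Pi.smul_apply, Matrix.mul_smul, Matrix.smul_mul, ← smul_sub]
  have hpartial : ∀ i : ℕ, i ≤ p+1 → ∀ v : Matrix (Fin a) (Fin b) ℂ,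
      ∃ u, Φ u = v - π i v := by
    intro i
    induction i with
    | zero =>
      intro _ v
      exact ⟨0, by rw [hzero, hπ]; simp⟩
    | succ i ih =>
      intro hi v
      obtain ⟨u, hu⟩ := ih (Nat.le_of_succ_le hi) v
      refine ⟨u + Pi.single (⟨i, hi⟩ : Fin (p+1)) v, ?_⟩
      rw [hadd, hu, hsingle (⟨i, hi⟩ : Fin (p+1)) v]
      abel
  have hkey : ∀ (v : Matrix (Fin a) (Fin b) ℂ) (j : Fin (p+1)),
      ∃ u, Φ u = v - A j * v * (D j)⁻¹ := by
    intro v j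
    obtain ⟨u₀, hu₀⟩ := hpartial j.val (Nat.le_of_lt j.isLt) (v - A j * v * (D j)⁻¹)
    refine ⟨u₀ + Pi.single j v, ?_⟩
    have hd : π j.val (v - A j * v * (D j)⁻¹) = π j.val v - π (j.val+1) v := by
      rw [hπsucc j v, hπ]
      simp only [Matrix.mul_sub, Matrix.sub_mul]
    rw [hadd, hu₀, hsingle j v, hd]
    abel
  have hrange : ∀ y ∈ W, ∃ u, Φ u = y := by
    intro y hy
    refine Submodule.span_induction ?_ ?_ ?_ ?_ hy
    · rintro x ⟨v, j, rfl⟩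
      exact hkey v j
    · exact ⟨0, hzero⟩
    · rintro x y _ _ ⟨u, rfl⟩ ⟨w, rfl⟩
      exact ⟨u + w, hadd u w⟩
    · rintro c x _ ⟨u, rfl⟩
      exact ⟨c • u, hsmul c u⟩
  have part1 : Function.Surjective Φ ↔ W = ⊤ := by
    constructor
    · intro h
      refine top_unique fun y _ => ?_
      obtain ⟨u, rfl⟩ := h y
      exact hPhiW u
    · intro h y
      exact hrange y (h ▸ Submodule.mem_top)
  -- the dual identification
  set E := trEquiv a b with hE
  have hmem : ∀ f : Matrix (Fin b) (Fin a) ℂ, (E f ∈ W.dualAnnihilator ↔ f ∈ Inter) := by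
    intro f
    rw [Submodule.mem_dualAnnihilator]
    constructor
    · intro h j
      have hvan : ∀ v : Matrix (Fin a) (Fin b) ℂ,
          ((f * v).trace : ℂ) = ((D j)⁻¹ * f * A j * v).trace := by
        intro v
        have h1 := h _ (hgen v j)
        rw [trEquiv_apply, Matrix.mul_sub, trace_sub, sub_eq_zero] at h1
        rw [h1]
        rw [show f * (A j * v * (D j)⁻¹) = f * A j * v * (D j)⁻¹ by
          simp only [Matrix.mul_assoc]]
        rw [trace_mul_comm]
        simp only [Matrix.mul_assoc]
      have hf : f = (D j)⁻¹ * f * A j := by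
        apply tr_injective
        ext v
        simpa [tr_apply] using hvan v
      have h2 : D j * f = D j * ((D j)⁻¹ * f * A j) := by rw [← hf]
      rw [h2, show D j * ((D j)⁻¹ * f * A j) = (D j * (D j)⁻¹) * (f * A j) by
        simp only [Matrix.mul_assoc], Matrix.mul_nonsing_inv _ (hDdet j), Matrix.one_mul]
    · intro hf w hw
      have hsub : W ≤ LinearMap.ker (E f) := by
        rw [Submodule.span_le]
        rintro x ⟨v, j, rfl⟩
        simp only [SetLike.mem_coe, LinearMap.mem_ker]
        rw [trEquiv_apply, Matrix.mul_sub, trace_sub, sub_eq_zero]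
        rw [show f * (A j * v * (D j)⁻¹) = (f * A j) * (v * (D j)⁻¹) by
          simp only [Matrix.mul_assoc]]
        rw [hf j]
        rw [show (D j * f) * (v * (D j)⁻¹) = D j * (f * (v * (D j)⁻¹)) by
          simp only [Matrix.mul_assoc]]
        rw [trace_mul_comm (D j) (f * (v * (D j)⁻¹))]
        rw [show f * (v * (D j)⁻¹) * D j = f * (v * ((D j)⁻¹ * D j)) by
          simp only [Matrix.mul_assoc]]
        rw [Matrix.nonsing_inv_mul _ (hDdet j), Matrix.mul_one]
      exact LinearMap.mem_ker.mp (hsub hw)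
  have hmapEq : W.dualAnnihilator = Inter.map (E : Matrix (Fin b) (Fin a) ℂ →ₗ[ℂ]
      Module.Dual ℂ (Matrix (Fin a) (Fin b) ℂ)) := by
    ext φ
    rw [Submodule.mem_map_equiv]
    rw [← hmem (E.symm φ), LinearEquiv.apply_symm_apply]
  have part2 : Nonempty (Module.Dual ℂ (Matrix (Fin a) (Fin b) ℂ ⧸ W) ≃ₗ[ℂ] Inter) := by
    exact ⟨(W.dualQuotEquivDualAnnihilator.trans (LinearEquiv.ofEq _ _ hmapEq)).trans
      (E.submoduleMap Inter).symm⟩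
  refine ⟨part1, part2, ?_⟩
  rw [part1]
  constructor
  · intro hW f hf
    have hbot : W.dualAnnihilator = ⊥ := by
      rw [hW, Submodule.dualAnnihilator_top]
    have : E f ∈ W.dualAnnihilator := by
      rw [hmapEq]
      exact Submodule.mem_map_of_mem hf
    rw [hbot, Submodule.mem_bot] at this
    have hf0 : f = 0 := by
      apply tr_injective
      rw [map_zero]
      exact this
    exact hf0
  · intro h
    rw [← Subspace.dualAnnihilator_inj, Submodule.dualAnnihilator_top, hmapEq]
    rw [Submodule.eq_bot_iff]
    rintro φ ⟨f, hf, rfl⟩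
    rw [h f hf]
    simp
end

section
/- Let n > 1 and suppose M_1, ..., M_{p+1} ∈ GL(n, ℂ) satisfy M_1⋯M_{p+1} = I. Fix an index j and for each i ≠ j fix λ_i ∈ ℂ with Σ_{i ≠ j} rank(M_i − λ_i I) < n. Then there exists a nonzero vector v with M_i v = λ_i v for all i ≠ j and M_j v = (Π_{i ≠ j} λ_i)^{-1} v; in particular the line ℂv is a common invariant subspace of all the M_i, so the tuple is reducible. -/
open Matrix

/-- Key step in the necessity of Simpson's condition (β_n): if M_1 ⋯ M_{p+1} = I and
for a fixed j the ranks of M_i − λ_i I (i ≠ j) sum to less than n, then there is a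
nonzero common eigenvector v with M_i v = λ_i v for i ≠ j and
M_j v = (∏_{i≠j} λ_i)⁻¹ v; in particular the line ℂv is invariant under all M_i, so the
tuple is reducible. -/
theorem stmt18 (n p : ℕ) (hn : 1 < n)
    (M : Fin (p+1) → Matrix (Fin n) (Fin n) ℂ)
    (hprod : ((List.finRange (p+1)).map M).prod = 1)
    (j : Fin (p+1)) (lam : Fin (p+1) → ℂ)
    (hrk : ∑ i ∈ Finset.univ.erase j,
        ((M i) - lam i • (1 : Matrix (Fin n) (Fin n) ℂ)).rank < n) :
    ∃ v : Fin n → ℂ, v ≠ 0 ∧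
      (∀ i, i ≠ j → (M i).mulVec v = lam i • v) ∧
      (M j).mulVec v = (∏ i ∈ Finset.univ.erase j, lam i)⁻¹ • v ∧
      ∀ i, ∀ x ∈ Submodule.span ℂ {v}, (M i).mulVec x ∈ Submodule.span ℂ {v} := by
  classical
  -- Step 1: dimension count
  have key : ∀ s : Finset (Fin (p+1)),
      n ≤ Module.finrank ℂ ↥(⨅ i ∈ s, LinearMap.ker (M i - lam i • 1).mulVecLin)
        + ∑ i ∈ s, (M i - lam i • (1 : Matrix (Fin n) (Fin n) ℂ)).rank := by
    intro s
    induction s using Finset.induction with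
    | empty =>
      rw [show (⨅ i ∈ (∅ : Finset (Fin (p+1))), LinearMap.ker (M i - lam i • 1).mulVecLin) = ⊤ by
        simp]
      simp
    | @insert a s hna ih =>
      rw [Finset.iInf_insert, Finset.sum_insert hna]
      set K := ⨅ i ∈ s, LinearMap.ker (M i - lam i • 1).mulVecLin
      have e1 := Submodule.finrank_sup_add_finrank_inf_eq
        (LinearMap.ker (M a - lam a • 1).mulVecLin) K
      have e2 : (M a - lam a • (1 : Matrix (Fin n) (Fin n) ℂ)).rank
          + Module.finrank ℂ ↥(LinearMap.ker (M a - lam a • 1).mulVecLin) = n := by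
        have := LinearMap.finrank_range_add_finrank_ker (M a - lam a • 1).mulVecLin
        simpa [Matrix.rank] using this
      have e3 : Module.finrank ℂ ↥(LinearMap.ker (M a - lam a • 1).mulVecLin ⊔ K) ≤ n := by
        have := Submodule.finrank_le (LinearMap.ker (M a - lam a • 1).mulVecLin ⊔ K)
        simpa using this
      omega
  have hK := key (Finset.univ.erase j)
  have hpos : 0 < Module.finrank ℂ
      ↥(⨅ i ∈ Finset.univ.erase j, LinearMap.ker (M i - lam i • 1).mulVecLin) := by omega
  have hne : (⨅ i ∈ Finset.univ.erase j, LinearMap.ker (M i - lam i • 1).mulVecLin) ≠ ⊥ := by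
    intro h
    rw [h] at hpos
    simp at hpos
  obtain ⟨v, hvK, hv0⟩ := Submodule.ne_bot_iff _ |>.mp hne
  simp only [Submodule.mem_iInf] at hvK
  have heig : ∀ i, i ≠ j → (M i).mulVec v = lam i • v := by
    intro i hij
    have h := hvK i (Finset.mem_erase.mpr ⟨hij, Finset.mem_univ i⟩)
    rw [LinearMap.mem_ker, Matrix.mulVecLin_apply] at h
    have h2 : (M i).mulVec v - lam i • v = 0 := by
      simpa [Matrix.sub_mulVec, Matrix.smul_mulVec, Matrix.one_mulVec] using h
    exact sub_eq_zero.mp h2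
  -- invertibility of each M i
  have hdet : ∀ i, IsUnit (M i).det := by
    intro i
    have h1 : (((List.finRange (p+1)).map M).map Matrix.det).prod = 1 := by
      have h := map_list_prod (Matrix.detMonoidHom) ((List.finRange (p+1)).map M)
      simp only [Matrix.coe_detMonoidHom] at h
      rw [hprod] at h
      simpa using h.symm
    have hmem : (M i).det ∈ ((List.finRange (p+1)).map M).map Matrix.det := by
      simp only [List.map_map, List.mem_map]
      exact ⟨i, List.mem_finRange i, rfl⟩
    exact isUnit_of_dvd_one (h1 ▸ List.dvd_prod hmem)
  have hMinj : ∀ i, Function.Injective (M i).mulVec := fun i =>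
    Matrix.mulVec_injective_iff_isUnit.mpr ((Matrix.isUnit_iff_isUnit_det _).mpr (hdet i))
  have hlne : ∀ i, i ≠ j → lam i ≠ 0 := by
    intro i hij h0
    apply hv0
    apply hMinj i
    rw [heig i hij, h0, zero_smul, Matrix.mulVec_zero]
  -- split the list at j
  set l : List (Fin (p+1)) := List.finRange (p+1) with hl
  set l1 : List (Fin (p+1)) := l.take j with hl1
  set l2 : List (Fin (p+1)) := l.drop (j+1) with hl2
  have hjlen : (j : ℕ) < l.length := by simpa [hl] using j.2
  have hgj : l[(j : ℕ)]'hjlen = j := by simp [hl]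
  have hsplit : l = l1 ++ j :: l2 := by
    calc l = l.take (j : ℕ) ++ l.drop (j : ℕ) := (List.take_append_drop _ _).symm
    _ = l1 ++ j :: l2 := by rw [List.drop_eq_getElem_cons hjlen, hgj]
  have hnd : (l1 ++ j :: l2).Nodup := hsplit ▸ List.nodup_finRange _
  rw [List.nodup_append] at hnd
  obtain ⟨hnd1, hnd2, hdisj⟩ := hnd
  have hj1 : j ∉ l1 := fun h => (hdisj j h j List.mem_cons_self rfl)
  have hj2 : j ∉ l2 := (List.nodup_cons.mp hnd2).1
  -- eigen relation for products over lists avoiding j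
  have hlist : ∀ L : List (Fin (p+1)), (∀ i ∈ L, i ≠ j) →
      ((L.map M).prod).mulVec v = ((L.map lam).prod) • v := by
    intro L
    induction L with
    | nil => simp
    | cons a L ih =>
      intro hL
      rw [List.map_cons, List.prod_cons, List.map_cons, List.prod_cons,
        ← Matrix.mulVec_mulVec, ih (fun i hi => hL i (List.mem_cons_of_mem _ hi)),
        Matrix.mulVec_smul, heig a (hL a List.mem_cons_self), smul_smul, mul_comm]
  have hmem1 : ∀ i ∈ l1, i ≠ j := fun i hi hij => hj1 (hij ▸ hi)
  have hmem2 : ∀ i ∈ l2, i ≠ j := fun i hi hij => hj2 (hij ▸ hi)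
  set P1 := (l1.map M).prod with hP1
  set P2 := (l2.map M).prod with hP2
  set c1 := (l1.map lam).prod with hc1
  set c2 := (l2.map lam).prod with hc2
  have hc1ne : c1 ≠ 0 := by
    rw [hc1, Ne, List.prod_eq_zero_iff]
    simp only [List.mem_map, not_exists, not_and]
    intro x hx h0
    exact hlne x (hmem1 x hx) h0
  have hc2ne : c2 ≠ 0 := by
    rw [hc2, Ne, List.prod_eq_zero_iff]
    simp only [List.mem_map, not_exists, not_and]
    intro x hx h0
    exact hlne x (hmem2 x hx) h0
  have h1 : P1.mulVec v = c1 • v := hlist l1 hmem1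
  have h2 : P2.mulVec v = c2 • v := hlist l2 hmem2
  have hprodsplit : P1 * (M j * P2) = 1 := by
    rw [hP1, hP2, ← List.prod_cons, ← List.map_cons, ← List.prod_append, ← List.map_append,
      ← hsplit]
    exact hprod
  have hvv : c2 • P1.mulVec ((M j).mulVec v) = v := by
    have := congrArg (fun X => X.mulVec v) hprodsplit
    simp only [Matrix.one_mulVec] at this
    rw [← Matrix.mulVec_mulVec, ← Matrix.mulVec_mulVec, h2, Matrix.mulVec_smul,
      Matrix.mulVec_smul] at this
    exact this
  -- P1 injective
  have hP1det : IsUnit P1.det := by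
    have h := map_list_prod (Matrix.detMonoidHom) (l1.map M)
    simp only [Matrix.coe_detMonoidHom] at h
    rw [hP1, h]
    apply List.prod_isUnit
    simp only [List.map_map, List.mem_map]
    rintro x ⟨i, hi, rfl⟩
    exact hdet i
  have hP1inj : Function.Injective P1.mulVec :=
    Matrix.mulVec_injective_iff_isUnit.mpr ((Matrix.isUnit_iff_isUnit_det _).mpr hP1det)
  have hMjv : (M j).mulVec v = (c1 * c2)⁻¹ • v := by
    apply hP1inj
    have hL : P1.mulVec ((M j).mulVec v) = c2⁻¹ • v := by
      have := congrArg (fun x => c2⁻¹ • x) hvv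
      simpa [smul_smul, inv_mul_cancel₀ hc2ne] using this
    rw [hL, Matrix.mulVec_smul, h1, smul_smul]
    congr 1
    field_simp
  have hndl : (l1 ++ l2).Nodup :=
    List.Nodup.append hnd1 (List.nodup_cons.mp hnd2).2
      (fun a ha hb => hdisj a ha a (List.mem_cons_of_mem _ hb) rfl)
  have hfin : Finset.univ.erase j = (l1 ++ l2).toFinset := by
    ext x
    simp only [Finset.mem_erase, Finset.mem_univ, and_true, List.mem_toFinset, List.mem_append]
    constructor
    · intro hx
      have hxl : x ∈ l := List.mem_finRange x
      rw [hsplit, List.mem_append, List.mem_cons] at hxl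
      tauto
    · rintro (h | h)
      exacts [hmem1 x h, hmem2 x h]
  have hprodeq : ∏ i ∈ Finset.univ.erase j, lam i = c1 * c2 := by
    rw [hfin, List.prod_toFinset lam hndl, List.map_append, List.prod_append]
  refine ⟨v, hv0, heig, ?_, ?_⟩
  · rw [hprodeq]; exact hMjv
  · intro i x hx
    rw [Submodule.mem_span_singleton] at hx ⊢
    obtain ⟨c, rfl⟩ := hx
    by_cases hij : i = j
    · subst hij
      exact ⟨c * (c1 * c2)⁻¹, by rw [Matrix.mulVec_smul, hMjv, smul_smul]⟩
    · exact ⟨c * lam i, by rw [Matrix.mulVec_smul, heig i hij, smul_smul]⟩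
end
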